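/- Let k ≥ 2 and m = −ℓ ≥ 1 with 2·k^m ≥ (k+1)^m. If positive integers a_1 ≤ a_2 ≤ ... ≤ a_k satisfy a_1^(-1/m) + ... + a_k^(-1/m) = 1 as real numbers, then each a_i^(1/m) is a rational number, and hence each a_i is a perfect m-th power. -/

import Mathlib

open Polynomial IntermediateField Finset

lemma root_rational_aux (k m : ℕ) (hm : 1 ≤ m) (a : Fin k → ℕ) (ha : ∀ i, 0 < a i)
    (heq : ∑ i, (((a i : ℝ)) ^ ((1 : ℝ) / m))⁻¹ = 1) (i₀ : Fin k) :
    ∃ q : ℚ, ((a i₀ : ℝ)) ^ ((1 : ℝ) / m) = (q : ℝ) := by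
  have hmne : m ≠ 0 := Nat.one_le_iff_ne_zero.mp hm
  set x : Fin k → ℝ := fun i => (a i : ℝ) ^ ((1:ℝ)/m) with hxdef
  have hx0 : ∀ i, 0 < x i := fun i => Real.rpow_pos_of_pos (by exact_mod_cast ha i) _
  have hxm : ∀ i, x i ^ m = (a i : ℝ) := by
    intro i
    have h0 : (0:ℝ) ≤ a i := by positivity
    have hm' : (m:ℝ) ≠ 0 := by exact_mod_cast hmne
    rw [hxdef, ← Real.rpow_natCast ((a i:ℝ) ^ ((1:ℝ)/m)) m, ← Real.rpow_mul h0, one_div,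
      inv_mul_cancel₀ hm', Real.rpow_one]
  set y : Fin k → ℂ := fun i => (x i : ℂ) with hydef
  have hym : ∀ i, y i ^ m = (a i : ℂ) := by
    intro i
    rw [hydef]
    rw [← Complex.ofReal_pow, hxm i]
    simp
  have hint : ∀ i, IsIntegral ℚ (y i) := by
    intro i
    refine ⟨X ^ m - C ((a i : ℚ)), monic_X_pow_sub_C _ hmne, ?_⟩
    simp [hym i]
  set S : Set ℂ := Set.range y with hSdef
  have hK : ∀ s ∈ S, IsIntegral ℚ s ∧ ((minpoly ℚ s).map (algebraMap ℚ ℂ)).Splits := by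
    rintro s ⟨i, rfl⟩; exact ⟨hint i, IsAlgClosed.splits _⟩
  have hmem : ∀ i, y i ∈ adjoin ℚ S := fun i => subset_adjoin ℚ S ⟨i, rfl⟩
  -- every embedding fixes every y i
  have hfix : ∀ φ : adjoin ℚ S →ₐ[ℚ] ℂ, ∀ i, φ ⟨y i, hmem i⟩ = y i := by
    intro φ
    set w : Fin k → ℂ := fun i => φ ⟨y i, hmem i⟩ with hwdef
    have hwm : ∀ i, w i ^ m = (a i : ℂ) := by
      intro i
      have hz : (⟨y i, hmem i⟩ : adjoin ℚ S) ^ m = ((a i : ℕ) : adjoin ℚ S) := by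
        apply Subtype.ext
        push_cast
        exact hym i
      rw [hwdef]
      simp only [← map_pow, hz, map_natCast]
    have habs : ∀ i, ‖w i‖ = x i := by
      intro i
      have h1 : ‖w i‖ ^ m = x i ^ m := by
        have := congrArg (‖·‖) (hwm i)
        rwa [norm_pow, Complex.norm_natCast, ← hxm i] at this
      exact (pow_left_inj₀ (norm_nonneg _) (hx0 i).le hmne).mp h1
    have hw0 : ∀ i, w i ≠ 0 := by
      intro i h
      have := habs i
      rw [h] at this
      simp at this
      exact (hx0 i).ne this
    have hsumy : ∑ i, (y i)⁻¹ = 1 := by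
      have := congrArg (fun r : ℝ => (r : ℂ)) heq
      push_cast at this
      exact this
    have hsumF : ∑ i, (⟨y i, hmem i⟩ : adjoin ℚ S)⁻¹ = 1 := by
      apply Subtype.ext
      push_cast
      exact hsumy
    have hsumw : ∑ i, (w i)⁻¹ = 1 := by
      have := congrArg φ hsumF
      rw [map_sum] at this
      simpa [hwdef, map_inv₀] using this
    have habsinv : ∀ i, ‖(w i)⁻¹‖ = (x i)⁻¹ := by
      intro i; rw [norm_inv, habs i]
    have hre_le : ∀ i ∈ univ, ((w i)⁻¹).re ≤ ‖(w i)⁻¹‖ :=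
      fun i _ => Complex.re_le_norm _
    have hsumre : ∑ i, ((w i)⁻¹).re = ∑ i, ‖(w i)⁻¹‖ := by
      have h1 : ∑ i, ((w i)⁻¹).re = 1 := by
        have := congrArg Complex.re hsumw
        simpa [Complex.re_sum] using this
      have h2 : ∑ i, ‖(w i)⁻¹‖ = 1 := by
        simp only [habsinv]
        rw [← heq]
      rw [h1, h2]
    have hre_eq : ∀ i ∈ univ, ((w i)⁻¹).re = ‖(w i)⁻¹‖ :=
      (Finset.sum_eq_sum_iff_of_le hre_le).mp hsumre
    intro i
    have h1 : ((w i)⁻¹).re = ‖(w i)⁻¹‖ := hre_eq i (mem_univ i)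
    -- w i⁻¹ is a nonneg real
    have him : ((w i)⁻¹).im = 0 := by
      have hsq := Complex.sq_norm ((w i)⁻¹)
      rw [← h1, Complex.normSq_apply] at hsq
      nlinarith [sq_nonneg ((w i)⁻¹).im]
    have h2 : (w i)⁻¹ = ((x i)⁻¹ : ℝ) := by
      have : (w i)⁻¹ = ((((w i)⁻¹).re : ℝ) : ℂ) := Complex.ext rfl him
      rw [this, h1, habsinv i]
    have h3 : w i = ((x i : ℝ) : ℂ) := by
      rw [← inv_inv (w i), h2]
      push_cast
      rw [inv_inv]
    exact h3
  -- conclude rationality of y i₀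
  have hintF := fun s hs => (hK s hs).1
  have key : ∀ r : ℂ, aeval r (minpoly ℚ (y i₀)) = 0 → r = y i₀ := by
    intro r hr
    obtain ⟨φ, hφ⟩ := IntermediateField.exists_algHom_adjoin_of_splits_of_aeval hK (hmem i₀) hr
    rw [← hφ]; exact hfix φ i₀
  have hintY := hint i₀
  have hp := minpoly.irreducible hintY
  have hsep : (minpoly ℚ (y i₀)).Separable := hp.separable
  have hsplits : ((minpoly ℚ (y i₀)).map (algebraMap ℚ ℂ)).Splits := IsAlgClosed.splits _
  have hdeg : (minpoly ℚ (y i₀)).natDegree = 1 := by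
    have hne : minpoly ℚ (y i₀) ≠ 0 := minpoly.ne_zero hintY
    have hcard : (minpoly ℚ (y i₀)).natDegree =
        Multiset.card ((minpoly ℚ (y i₀)).aroots ℂ) :=
      (by rw [← natDegree_map (algebraMap ℚ ℂ)]; exact hsplits.natDegree_eq_card_roots)
    have hnodup : ((minpoly ℚ (y i₀)).aroots ℂ).Nodup :=
      Polynomial.nodup_roots (hsep.map (f := algebraMap ℚ ℂ))
    have hsub : ∀ r ∈ (minpoly ℚ (y i₀)).aroots ℂ, r = y i₀ := by
      intro r hrm
      have := (Polynomial.mem_aroots.mp hrm).2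
      exact key r this
    have hrep : (minpoly ℚ (y i₀)).aroots ℂ =
        Multiset.replicate (Multiset.card ((minpoly ℚ (y i₀)).aroots ℂ)) (y i₀) :=
      Multiset.eq_replicate_card.mpr hsub
    have hle : Multiset.card ((minpoly ℚ (y i₀)).aroots ℂ) ≤ 1 := by
      have hc := Multiset.nodup_iff_count_le_one.mp hnodup (y i₀)
      rwa [hrep, Multiset.count_replicate_self] at hc
    have hge : 0 < Multiset.card ((minpoly ℚ (y i₀)).aroots ℂ) := by
      have : y i₀ ∈ (minpoly ℚ (y i₀)).aroots ℂ := by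
        rw [Polynomial.mem_aroots]
        exact ⟨hne, minpoly.aeval ℚ (y i₀)⟩
      exact Multiset.card_pos_iff_exists_mem.mpr ⟨_, this⟩
    omega
  have hmemrange : y i₀ ∈ (algebraMap ℚ ℂ).range := (minpoly.natDegree_eq_one_iff).mp hdeg
  obtain ⟨q, hq⟩ := hmemrange
  refine ⟨q, ?_⟩
  have hq' : ((q : ℂ)) = ((x i₀ : ℝ) : ℂ) := by
    show ((q : ℂ)) = y i₀
    rw [← hq]; simp
  exact_mod_cast hq'.symm

theorem roots_rational_of_reciprocal_sum_one (k m : ℕ) (hk : 2 ≤ k) (hm : 1 ≤ m)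
    (hkm : (k + 1) ^ m ≤ 2 * k ^ m)
    (a : Fin k → ℕ) (ha : ∀ i, 0 < a i)
    (hmono : ∀ i j : Fin k, i ≤ j → a i ≤ a j)
    (heq : ∑ i, (((a i : ℝ)) ^ ((1 : ℝ) / m))⁻¹ = 1) :
    ∀ i, (∃ q : ℚ, ((a i : ℝ)) ^ ((1 : ℝ) / m) = (q : ℝ)) ∧
      ∃ n : ℕ, a i = n ^ m := by
  intro i
  obtain ⟨q, hq⟩ := root_rational_aux k m hm a ha heq i
  refine ⟨⟨q, hq⟩, ?_⟩
  have hmne : m ≠ 0 := Nat.one_le_iff_ne_zero.mp hm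
  have hx0 : (0:ℝ) < (a i : ℝ) ^ ((1:ℝ)/m) :=
    Real.rpow_pos_of_pos (by exact_mod_cast ha i) _
  have hq0 : 0 < q := by
    have : (0:ℝ) < (q:ℝ) := hq ▸ hx0
    exact_mod_cast this
  have hxm : ((a i : ℝ) ^ ((1:ℝ)/m)) ^ m = (a i : ℝ) := by
    have h0 : (0:ℝ) ≤ a i := by positivity
    have hm' : (m:ℝ) ≠ 0 := by exact_mod_cast hmne
    rw [← Real.rpow_natCast ((a i:ℝ) ^ ((1:ℝ)/m)) m, ← Real.rpow_mul h0, one_div,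
      inv_mul_cancel₀ hm', Real.rpow_one]
  have hqm : q ^ m = (a i : ℚ) := by
    have h : ((q:ℝ)) ^ m = (a i : ℝ) := by rw [← hq]; exact hxm
    exact_mod_cast h
  have hint : IsIntegral ℤ q :=
    ⟨Polynomial.X ^ m - Polynomial.C ((a i : ℤ)), Polynomial.monic_X_pow_sub_C _ hmne,
      by simp [hqm]⟩
  obtain ⟨z, hz⟩ := IsIntegrallyClosed.isIntegral_iff.mp hint
  have hz' : (z : ℚ) = q := hz
  have hz0 : 0 ≤ z := by
    have : (0:ℚ) < (z:ℚ) := by rw [hz']; exact_mod_cast hq0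
    exact_mod_cast this.le
  refine ⟨z.toNat, ?_⟩
  have : ((z.toNat : ℚ)) ^ m = (a i : ℚ) := by
    have h1 : ((z.toNat : ℤ) : ℚ) = q := by rw [Int.toNat_of_nonneg hz0, hz']
    have h2 : ((z.toNat : ℚ)) = q := by exact_mod_cast h1
    rw [h2, hqm]
  exact_mod_cast this.symm
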